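/- Let A = {A_i}_{1 ≤ i ≤ n+1} be a polygon in ℝ^N. Then the first variation identity holds: for every continuously differentiable, compactly supported vector field θ : ℝ^N → ℝ^N, one has ∑_{i=1}^n ∫_{[A_i,A_{i+1}]} ⟪Dθ(x) τ_i, τ_i⟫ dℋ¹(x) = ∑_{i=1}^n ⟪θ(A_i), H_i⟫, where Dθ(x) denotes the (Fréchet) derivative of θ at x and ℋ¹ is the 1-dimensional Hausdorff measure on ℝ^N. -/

import Mathlib

open MeasureTheory
open scoped RealInnerProductSpace ENNReal NNReal

noncomputable section

/-- The length of the `i`-th side of the polygon with vertices `A` (indices cyclic). -/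
def polyLen {N n : ℕ} (A : ZMod n → EuclideanSpace ℝ (Fin N)) (i : ZMod n) : ℝ :=
  ‖A (i + 1) - A i‖

/-- The unit tangent vector of the `i`-th side of the polygon with vertices `A`. -/
def polyTau {N n : ℕ} (A : ZMod n → EuclideanSpace ℝ (Fin N)) (i : ZMod n) :
    EuclideanSpace ℝ (Fin N) :=
  ‖A (i + 1) - A i‖⁻¹ • (A (i + 1) - A i)

/-- The curvature vector of the polygon with vertices `A` at the vertex `A i`. -/
def polyH {N n : ℕ} (A : ZMod n → EuclideanSpace ℝ (Fin N)) (i : ZMod n) :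
    EuclideanSpace ℝ (Fin N) :=
  ‖A i - A (i - 1)‖⁻¹ • (A i - A (i - 1)) + ‖A i - A (i + 1)‖⁻¹ • (A i - A (i + 1))

/-- `A` (a cyclic list of vertices) is a polygon: there are at least 3 vertices, consecutive
vertices are distinct, open sides do not meet each other, and a vertex belongs only to its
two consecutive (closed) sides. -/
def IsPolygon {N n : ℕ} [NeZero n] (A : ZMod n → EuclideanSpace ℝ (Fin N)) : Prop :=
  3 ≤ n ∧
  (∀ i, A (i + 1) ≠ A i) ∧
  (∀ i j : ZMod n, i ≠ j →
    openSegment ℝ (A i) (A (i + 1)) ∩ openSegment ℝ (A j) (A (j + 1)) = ∅) ∧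
  (∀ i j : ZMod n, A i ∈ segment ℝ (A j) (A (j + 1)) → j = i ∨ j = i - 1)

open Set in
private lemma seg_integral {N : ℕ} {A B : EuclideanSpace ℝ (Fin N)} (hAB : B ≠ A)
    (θ : EuclideanSpace ℝ (Fin N) → EuclideanSpace ℝ (Fin N))
    (hθ : ContDiff ℝ 1 θ) :
    ∫ x in segment ℝ A B,
        ⟪fderiv ℝ θ x (‖B - A‖⁻¹ • (B - A)), ‖B - A‖⁻¹ • (B - A)⟫ ∂(μH[1]) =
      ⟪θ B - θ A, ‖B - A‖⁻¹ • (B - A)⟫ := by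
  set τ : EuclideanSpace ℝ (Fin N) := ‖B - A‖⁻¹ • (B - A) with hτ
  set L : ℝ := ‖B - A‖ with hL
  have hL0 : 0 < L := by simpa [hL] using sub_ne_zero.mpr hAB
  have hτ1 : ‖τ‖ = 1 := by
    rw [hτ, norm_smul, norm_inv, norm_norm, inv_mul_cancel₀ hL0.ne']
  set f : ℝ → EuclideanSpace ℝ (Fin N) := fun t => A + t • τ with hf
  have hfiso : Isometry f := by
    apply Isometry.of_dist_eq
    intro x y
    simp only [hf, dist_eq_norm]
    rw [show A + x • τ - (A + y • τ) = (x - y) • τ by module, norm_smul, hτ1]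
    simp [Real.norm_eq_abs]
  have hBf : f L = B := by
    simp only [hf, hτ, smul_smul, hL, mul_inv_cancel₀ hL0.ne', one_smul]
    rw [mul_inv_cancel₀ (norm_ne_zero_iff.mpr (sub_ne_zero.mpr hAB)), one_smul]
    abel
  have hAf : f 0 = A := by simp [hf]
  have hseg : segment ℝ A B = f '' Icc 0 L := by
    rw [segment_eq_image']
    ext x
    constructor
    · rintro ⟨t, ⟨ht0, ht1⟩, rfl⟩
      exact ⟨t * L, ⟨mul_nonneg ht0 hL0.le, by nlinarith⟩,
        by simp only [hf, hτ, smul_smul]; rw [mul_assoc, mul_inv_cancel₀ hL0.ne', mul_one]⟩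
    · rintro ⟨t, ⟨ht0, ht1⟩, rfl⟩
      refine ⟨t / L, ⟨div_nonneg ht0 hL0.le, by rw [div_le_one hL0]; exact ht1⟩, ?_⟩
      simp only [hf, hτ, smul_smul, div_eq_mul_inv]
  have hmeas : MeasurableSet (segment ℝ A B) := by
    rw [hseg]; exact (isCompact_Icc.image hfiso.continuous).isClosed.measurableSet
  have hpre : f ⁻¹' (segment ℝ A B) = Icc 0 L := by
    rw [hseg, Set.preimage_image_eq _ hfiso.injective]
  have hmapμ : (μH[1] : Measure (EuclideanSpace ℝ (Fin N))).restrict (segment ℝ A B)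
      = Measure.map f ((μH[1] : Measure ℝ).restrict (Icc 0 L)) := by
    have h1 : Measure.map f (μH[1] : Measure ℝ) = μH[1].restrict (Set.range f) :=
      hfiso.map_hausdorffMeasure (Or.inl zero_le_one)
    have h2 := (Measure.restrict_map hfiso.continuous.measurable hmeas
      (μ := (μH[1] : Measure ℝ)))
    rw [h1, hpre] at h2
    rw [← h2, Measure.restrict_restrict hmeas, Set.inter_eq_left.mpr]
    rw [hseg]; exact Set.image_subset_range _ _
  have hg : Continuous fun x => (⟪fderiv ℝ θ x τ, τ⟫ : ℝ) := by
    have : Continuous fun x => fderiv ℝ θ x := hθ.continuous_fderiv one_ne_zero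
    exact Continuous.inner ((ContinuousLinearMap.apply ℝ _ τ).continuous.comp this)
      continuous_const
  rw [hmapμ, integral_map hfiso.continuous.measurable.aemeasurable
    hg.aestronglyMeasurable]
  rw [show (μH[1] : Measure ℝ) = volume from MeasureTheory.hausdorffMeasure_real]
  have hderiv : ∀ t ∈ uIcc (0:ℝ) L,
      HasDerivAt (fun t => (⟪θ (f t), τ⟫ : ℝ)) ⟪fderiv ℝ θ (f t) τ, τ⟫ t := by
    intro t _
    have hft : HasDerivAt f τ t := by
      simpa [hf] using ((hasDerivAt_id t).smul_const τ).const_add A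
    have hθt : HasDerivAt (fun t => θ (f t)) (fderiv ℝ θ (f t) τ) t :=
      ((hθ.differentiable one_ne_zero).differentiableAt.hasFDerivAt).comp_hasDerivAt t hft
    simpa using hθt.inner ℝ (hasDerivAt_const t τ)
  have hcont : IntervalIntegrable (fun t => (⟪fderiv ℝ θ (f t) τ, τ⟫ : ℝ)) volume 0 L :=
    ((hg.comp hfiso.continuous).continuousOn).intervalIntegrable
  have hftc := intervalIntegral.integral_eq_sub_of_hasDerivAt hderiv hcont
  rw [integral_Icc_eq_integral_Ioc, ← intervalIntegral.integral_of_le hL0.le, hftc,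
    hAf, hBf, ← inner_sub_left]

/-- **First variation of the varifold associated to a polygon**:
for any compactly supported `C¹` vector field `θ`,
`∑ᵢ ∫_{[Aᵢ, Aᵢ₊₁]} ⟪Dθ(x) τᵢ, τᵢ⟫ dℋ¹(x) = ∑ᵢ ⟪θ(Aᵢ), Hᵢ⟫`. -/
theorem polygon_first_variation {N n : ℕ} [NeZero n]
    (A : ZMod n → EuclideanSpace ℝ (Fin N)) (hA : IsPolygon A)
    (θ : EuclideanSpace ℝ (Fin N) → EuclideanSpace ℝ (Fin N))
    (hθ : ContDiff ℝ 1 θ) (hθc : HasCompactSupport θ) :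
    ∑ i : ZMod n, ∫ x in segment ℝ (A i) (A (i + 1)),
        ⟪fderiv ℝ θ x (polyTau A i), polyTau A i⟫ ∂(μH[1]) =
      ∑ i : ZMod n, ⟪θ (A i), polyH A i⟫ := by
  obtain ⟨-, hne, -, -⟩ := hA
  have step : ∀ i : ZMod n, ∫ x in segment ℝ (A i) (A (i + 1)),
      ⟪fderiv ℝ θ x (polyTau A i), polyTau A i⟫ ∂(μH[1]) =
      ⟪θ (A (i + 1)) - θ (A i), polyTau A i⟫ := by
    intro i
    simpa only [polyTau] using seg_integral (hne i) θ hθ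
  have hH : ∀ i : ZMod n, polyH A i = polyTau A (i - 1) - polyTau A i := by
    intro i
    simp only [polyH, polyTau, sub_add_cancel]
    rw [norm_sub_rev (A i) (A (i + 1)), show A i - A (i + 1) = -(A (i + 1) - A i) by abel,
      smul_neg]
    abel
  simp only [step, inner_sub_left, Finset.sum_sub_distrib, hH, inner_sub_right]
  congr 1
  exact Fintype.sum_equiv (Equiv.addRight (1 : ZMod n))
    (fun i => (⟪θ (A (i + 1)), polyTau A i⟫ : ℝ))
    (fun i => (⟪θ (A i), polyTau A (i - 1)⟫ : ℝ))
    (fun i => by simp)
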